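/- Let A be a C*-algebra with a coaction δ of a locally compact group G, and let J = {a ∈ A : f·a = 0 for all f ∈ E}, where E is a weak*-closed G-invariant ideal of B(G) and f·a = (id ⊗ f)(δ(a)). Then the annihilator J⊥ in A* equals the weak*-closed span of {ω·f : ω ∈ A*, f ∈ E}, where ω·f = (ω ⊗ f)∘δ. -/

import Mathlib

open Filter Topology

/-- Every continuous linear functional on the weak-* dual is evaluation at a point. -/
lemma weakDual_clm_exists_eval {A : Type*} [NormedAddCommGroup A] [NormedSpace ℂ A]
    (g : WeakDual ℂ A →L[ℂ] ℂ) : ∃ a : A, ∀ ψ : WeakDual ℂ A, g ψ = ψ a := by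
  set B := topDualPairing ℂ A with hB
  have hb := B.hasBasis_weakBilin
  have hmem : g ⁻¹' Metric.ball (0 : ℂ) 1 ∈ 𝓝 (0 : WeakBilin B) := by
    have := g.continuous.tendsto (0 : WeakDual ℂ A)
    rw [map_zero] at this
    exact this (Metric.ball_mem_nhds _ one_pos)
  obtain ⟨U, hU, hUsub⟩ := hb.mem_iff.1 hmem
  obtain ⟨s, ε, hε, rfl⟩ := (SeminormFamily.basisSets_iff _).1 hU
  have key : ∀ ψ : WeakDual ℂ A, (∀ b ∈ s, ψ b = 0) → g ψ = 0 := by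
    intro ψ hψ
    by_contra hgψ
    set χ : WeakDual ℂ A := (2 / g ψ) • ψ with hχdef
    have hχ : ∀ b ∈ s, χ b = 0 := fun b hb => by
      rw [hχdef]; show (2 / g ψ) * ψ b = 0; rw [hψ b hb, mul_zero]
    have hball : (χ : WeakBilin B) ∈ (s.sup B.toSeminormFamily).ball 0 ε := by
      refine (Seminorm.mem_ball_zero _).2 ?_
      refine Seminorm.finset_sup_apply_lt hε fun b hb => ?_
      show ‖χ b‖ < ε
      rw [hχ b hb]
      simpa using hε
    have := hUsub hball
    change dist (g χ) 0 < 1 at this; rw [dist_zero_right] at this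
    rw [hχdef, map_smul, smul_eq_mul, div_mul_cancel₀ _ hgψ] at this
    norm_num at this
  -- linear algebra step
  have hker : ⨅ i : {x // x ∈ s}, LinearMap.ker (B.flip i.1) ≤ LinearMap.ker (g : WeakDual ℂ A →ₗ[ℂ] ℂ) := by
    intro ψ hψ
    simp only [Submodule.mem_iInf, LinearMap.mem_ker] at hψ ⊢
    exact key ψ fun b hb => hψ ⟨b, hb⟩
  have hspan := mem_span_of_iInf_ker_le_ker (ι := {x // x ∈ s}) hker
  obtain ⟨c, hc⟩ := (Submodule.mem_span_range_iff_exists_fun ℂ).1 hspan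
  refine ⟨∑ i : {x // x ∈ s}, c i • (i : A), fun ψ => ?_⟩
  have := congrFun (congrArg (fun (h : WeakDual ℂ A →ₗ[ℂ] ℂ) => (h : WeakDual ℂ A → ℂ)) hc) ψ
  replace this : ∑ i, c i • B.flip ↑i ψ = g ψ := (LinearMap.sum_apply (M := A →L[ℂ] ℂ) _ _ _).symm.trans this
  have h2 : g ψ = ∑ x : {x // x ∈ s}, c x • ψ x.1 := this.symm
  rw [h2, map_sum]
  simp

/-- Hahn–Banach separation for the weak-* dual: a point outside a weak*-closed subspace
is separated from it by evaluation at a point. -/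
lemma weakDual_exists_eval_of_not_mem_closure {A : Type*} [NormedAddCommGroup A]
    [NormedSpace ℂ A] (M : Submodule ℂ (WeakDual ℂ A)) (φ : WeakDual ℂ A)
    (h : φ ∉ M.topologicalClosure) :
    ∃ a : A, (∀ ψ ∈ M, ψ a = 0) ∧ φ a ≠ 0 := by
  haveI : IsScalarTower ℝ ℂ (WeakDual ℂ A) :=
    inferInstanceAs (IsScalarTower ℝ ℂ (A →L[ℂ] ℂ))
  haveI : LocallyConvexSpace ℝ (WeakDual ℂ A) :=
    inferInstanceAs (LocallyConvexSpace ℝ (WeakBilin (topDualPairing ℂ A)))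
  have hconv : Convex ℝ (M.topologicalClosure : Set (WeakDual ℂ A)) :=
    (M.topologicalClosure.restrictScalars ℝ).convex
  have hclosed : IsClosed (M.topologicalClosure : Set (WeakDual ℂ A)) :=
    M.isClosed_topologicalClosure
  obtain ⟨g, u, hgM, hgφ⟩ := @RCLike.geometric_hahn_banach_closed_point ℂ (WeakDual ℂ A) _ _ _ _ _ _ _ _ _ _ (by exact this)
    hconv hclosed h
  have hu : 0 < u := by simpa using hgM 0 (Submodule.zero_mem _)
  -- g vanishes on M
  have hg0 : ∀ ψ ∈ M, g ψ = 0 := by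
    intro ψ hψ
    by_contra hne
    have hpos : (0:ℝ) < ‖g ψ‖ ^ 2 := pow_pos (norm_pos_iff.mpr hne) 2
    set t : ℝ := (u + 1) / ‖g ψ‖ ^ 2 with htdef
    have hmem : ((t : ℂ) * (starRingEnd ℂ) (g ψ)) • ψ ∈ M.topologicalClosure :=
      Submodule.le_topologicalClosure M (M.smul_mem _ hψ)
    have hlt := hgM _ hmem
    rw [map_smul, smul_eq_mul, mul_assoc, RCLike.conj_mul] at hlt
    have ht : t * ‖g ψ‖ ^ 2 = u + 1 := div_mul_cancel₀ _ (ne_of_gt hpos)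
    rw [← RCLike.ofReal_pow] at hlt
    simp only [RCLike.mul_re, RCLike.re_to_complex, RCLike.im_to_complex, RCLike.ofReal_re, RCLike.ofReal_im, Complex.ofReal_re,
      Complex.ofReal_im, zero_mul, mul_zero, sub_zero] at hlt
    rw [ht] at hlt
    linarith
  obtain ⟨a, ha⟩ := weakDual_clm_exists_eval g
  refine ⟨a, fun ψ hψ => ?_, fun h0 => ?_⟩
  · rw [← ha ψ]; exact hg0 ψ hψ
  · rw [ha φ, h0] at hgφ
    simp at hgφ; linarith



/-- Lemma 6.5(2) of the paper, abstract form.  `A` carries a coaction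
`δ : A → M(A ⊗ C*(G))`, modelled by an isometry `δ : A → D`, together with slice maps
`slice f : D → A` (`f` ranging over `B(G) = Cst*`, taken with its weak* topology), so
that `f·a = slice f (δ a)` and `ω·f = ω ∘ slice f ∘ δ`.  For a weak*-closed
`B(G)`-ideal `E` and `J = {a : f·a = 0 for all f ∈ E}`, the annihilator `J⊥ ⊆ A*`
equals the weak*-closed span of `{ω·f : ω ∈ A*, f ∈ E}`. -/
theorem annihilator_of_killing_ideal_eq_weakStarClosure_span
    {A D Cst : Type*}
    [NormedAddCommGroup A] [NormedSpace ℂ A]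
    [NormedAddCommGroup D] [NormedSpace ℂ D]
    [NormedAddCommGroup Cst] [NormedSpace ℂ Cst]
    (δ : A →L[ℂ] D) (hδ : ∀ a : A, ‖δ a‖ = ‖a‖)
    (slice : WeakDual ℂ Cst → (D →L[ℂ] A))
    (slice_add : ∀ f g, slice (f + g) = slice f + slice g)
    (slice_smul : ∀ (c : ℂ) f, slice (c • f) = c • slice f)
    -- the multiplication of `B(G)` and the hypotheses on `E`:
    (mulB : WeakDual ℂ Cst → WeakDual ℂ Cst → WeakDual ℂ Cst)
    (E : Submodule ℂ (WeakDual ℂ Cst))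
    (hEclosed : IsClosed (E : Set (WeakDual ℂ Cst)))
    (hEideal : ∀ f ∈ E, ∀ g, mulB f g ∈ E ∧ mulB g f ∈ E) :
    {φ : WeakDual ℂ A | ∀ a : A, (∀ f ∈ E, slice f (δ a) = 0) → φ a = 0}
      = ((Submodule.span ℂ
          {φ : WeakDual ℂ A | ∃ (ω : A →L[ℂ] ℂ), ∃ f ∈ E,
            ∀ a : A, φ a = ω (slice f (δ a))}).topologicalClosure
          : Set (WeakDual ℂ A)) := by
  set S : Set (WeakDual ℂ A) := {φ : WeakDual ℂ A | ∃ (ω : A →L[ℂ] ℂ), ∃ f ∈ E,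
      ∀ a : A, φ a = ω (slice f (δ a))} with hS
  set M : Submodule ℂ (WeakDual ℂ A) := Submodule.span ℂ S with hM
  ext φ
  simp only [Set.mem_setOf_eq, SetLike.mem_coe]
  constructor
  · intro hφ
    by_contra hmem
    obtain ⟨a, hMa, hφa⟩ := weakDual_exists_eval_of_not_mem_closure M φ hmem
    refine hφa (hφ a fun f hf => ?_)
    refine NormedSpace.eq_zero_of_forall_dual_eq_zero ℂ fun ω => ?_
    have hgen : (ω.comp ((slice f).comp δ) : WeakDual ℂ A) ∈ M :=
      Submodule.subset_span ⟨ω, f, hf, fun b => rfl⟩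
    exact hMa _ hgen
  · intro hφ a ha
    -- evaluation at `a` as a linear functional, whose kernel is closed and contains `S`
    let L : WeakDual ℂ A →ₗ[ℂ] ℂ := (topDualPairing ℂ A).flip a
    have hker_closed : IsClosed {ψ : WeakDual ℂ A | ψ a = 0} := by
      have : Continuous fun ψ : WeakDual ℂ A => ψ a := WeakDual.eval_continuous a
      exact isClosed_eq this continuous_const
    have hsub : M ≤ LinearMap.ker L := by
      rw [hM, Submodule.span_le]
      rintro ψ ⟨ω, f, hf, hψ⟩
      simp only [SetLike.mem_coe, LinearMap.mem_ker]
      show ψ a = 0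
      rw [hψ a, ha f hf, map_zero]
    have hclosure : M.topologicalClosure ≤ LinearMap.ker L := by
      refine Submodule.topologicalClosure_minimal M hsub ?_
      exact hker_closed
    exact hclosure hφ
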